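/- Identification of the incremental effect for one time point (weighting form): Under consistency and exchangeability, with π(X) = P(A=1|X), E[Y^Q] = E[ Y(δA + 1 - A) / (δπ(X) + 1 - π(X)) ], where Y^Q is the counterfactual outcome under the incremental propensity score intervention with parameter δ ∈ (0, ∞). -/

import Mathlib

open MeasureTheory ProbabilityTheory

section AuxLemmas

lemma my_condIndepFun_congr_right {Ω : Type*} {m' mΩ : MeasurableSpace Ω}
    [StandardBorelSpace Ω] (hm' : m' ≤ mΩ)
    {P : Measure Ω} [IsProbabilityMeasure P]
    {A Y Z : Ω → ℝ} (hYZ : Y =ᵐ[P] Z)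
    (h : CondIndepFun m' hm' A Y P) : CondIndepFun m' hm' A Z P := by
  set κ := condExpKernel P m' with hκdef
  set N := toMeasurable P {ω | Y ω ≠ Z ω} with hNdef
  have hN : MeasurableSet N := measurableSet_toMeasurable _ _
  have hPN : P N = 0 := by
    rw [hNdef, measure_toMeasurable]
    exact ae_iff.mp hYZ
  have hker : ∀ᵐ a ∂(P.trim hm'), κ a N = 0 := by
    have h1 : (fun ω => (κ ω N).toReal) =ᵐ[P.trim hm'] P⟦N | m'⟧ :=
      by have := condExpKernel_ae_eq_trim_condExp (μ := P) hm' hN; exact this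
    have h2 : P⟦N | m'⟧ =ᵐ[P] (0 : Ω → ℝ) := by
      refine (condExp_congr_ae (g := (0 : Ω → ℝ)) ?_).trans ?_
      · filter_upwards [measure_eq_zero_iff_ae_notMem.mp hPN] with ω hω
        simp [Set.indicator_of_notMem hω]
      · rw [condExp_zero]
    have h2' : P⟦N | m'⟧ =ᵐ[P.trim hm'] (0 : Ω → ℝ) := by
      exact (StronglyMeasurable.ae_eq_trim_iff hm' stronglyMeasurable_condExp stronglyMeasurable_const).mpr h2
    filter_upwards [h1, h2'] with a ha hb
    have h3 : (κ a N).toReal = 0 := by rw [ha, hb]; rfl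
    rcases (ENNReal.toReal_eq_zero_iff _).mp h3 with h4 | h4
    · exact h4
    · exact absurd h4 (measure_ne_top _ _)
  intro t1 t2 ht1 ht2
  obtain ⟨t, ht, rfl⟩ := ht2
  have h' := h t1 (Y ⁻¹' t) ht1 ⟨t, ht, rfl⟩
  filter_upwards [h', hker] with a ha hk
  have hae : ∀ᵐ ω ∂(κ a), Y ω = Z ω := by
    filter_upwards [measure_eq_zero_iff_ae_notMem.mp hk] with ω hω
    by_contra hne
    exact hω (subset_toMeasurable _ _ hne)
  have e1 : κ a (t1 ∩ Z ⁻¹' t) = κ a (t1 ∩ Y ⁻¹' t) := by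
    refine measure_congr ?_
    filter_upwards [hae] with ω hω
    show (ω ∈ t1 ∧ Z ω ∈ t) = (ω ∈ t1 ∧ Y ω ∈ t)
    rw [hω]
  have e2 : κ a (Z ⁻¹' t) = κ a (Y ⁻¹' t) := by
    refine measure_congr ?_
    filter_upwards [hae] with ω hω
    show (Z ω ∈ t) = (Y ω ∈ t)
    rw [hω]
  rw [e1, e2]
  exact ha

lemma my_aux_integral {Ω : Type*} {m mΩ : MeasurableSpace Ω} [Nonempty Ω]
    (P : Measure Ω) [IsProbabilityMeasure P] (hm : m ≤ mΩ)
    (A Z : Ω → ℝ) (hA : Measurable A) (hAbin : ∀ ω, A ω = 0 ∨ A ω = 1)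
    (hZ : Measurable Z) (hZint : Integrable Z P)
    (hfact : ∀ t : Set ℝ, MeasurableSet t →
      (P⟦A ⁻¹' {1} ∩ Z ⁻¹' t | m⟧) =ᵐ[P]
        fun ω => (P⟦A ⁻¹' {1} | m⟧) ω * (P⟦Z ⁻¹' t | m⟧) ω)
    (g : Ω → ℝ) (hg : StronglyMeasurable[m] g) (C : ℝ) (hgC : ∀ ω, |g ω| ≤ C) :
    ∫ ω, g ω * (A ω * Z ω) ∂P = ∫ ω, g ω * ((P[A|m]) ω * (P[Z|m]) ω) ∂P := by
  have hC0 : 0 ≤ C := le_trans (abs_nonneg _) (hgC (Classical.arbitrary Ω))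
  set s₁ : Set Ω := A ⁻¹' {1} with hs₁def
  have hs₁ : MeasurableSet s₁ := hA (measurableSet_singleton 1)
  have hAind : A = s₁.indicator (fun _ => (1:ℝ)) := by
    funext ω
    rcases hAbin ω with h0 | h1
    · rw [Set.indicator_of_notMem (by simp [hs₁def, Set.mem_preimage, h0]), h0]
    · rw [Set.indicator_of_mem (by simp [hs₁def, Set.mem_preimage, h1]), h1]
  set h : Ω → ℝ := P⟦s₁ | m⟧ with hhdef
  have hPA : P[A|m] = h := by rw [hAind]
  have hAint : Integrable A P := by
    refine (integrable_const (1:ℝ)).mono' hA.aestronglyMeasurable (ae_of_all _ fun ω => ?_)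
    rcases hAbin ω with h' | h' <;> simp [h']
  have hAabs : ∀ ω, |A ω| ≤ 1 := fun ω => by
    rcases hAbin ω with h' | h' <;> simp [h']
  have hhsm : StronglyMeasurable[m] h := stronglyMeasurable_condExp
  have hhint : Integrable h P := integrable_condExp
  have hh1 : ∀ᵐ ω ∂P, |h ω| ≤ 1 := by
    have hnn : 0 ≤ᵐ[P] h :=
      condExp_nonneg (ae_of_all _ fun ω => Set.indicator_nonneg (fun _ _ => zero_le_one) ω)
    have hle : h ≤ᵐ[P] fun _ => (1:ℝ) := by
      have h2 := condExp_mono (μ := P) (m := m)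
        ((integrable_const (1:ℝ)).indicator hs₁) (integrable_const (1:ℝ))
        (ae_of_all _ fun ω => Set.indicator_le_self' (fun _ _ => zero_le_one) ω)
      refine h2.trans ?_
      rw [condExp_const hm]
    filter_upwards [hnn, hle] with ω h1 h2
    rw [abs_le]
    have h1' : (0:ℝ) ≤ h ω := h1
    exact ⟨by linarith, h2⟩
  -- base case of the pi-system induction
  have key_base : ∀ B, MeasurableSet[m] B → ∀ t : Set ℝ, MeasurableSet t →
      ∫ ω in B ∩ Z ⁻¹' t, h ω ∂P = ∫ ω in B ∩ Z ⁻¹' t, A ω ∂P := by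
    intro B hB t ht
    have hZt : MeasurableSet (Z ⁻¹' t) := hZ ht
    have hBm : MeasurableSet B := hm _ hB
    set χ : Ω → ℝ := (Z ⁻¹' t).indicator (fun _ => (1:ℝ)) with hχdef
    have hχabs : ∀ ω, |χ ω| ≤ 1 := fun ω => by
      by_cases hω : ω ∈ Z ⁻¹' t <;>
        simp [hχdef, Set.indicator_of_mem, Set.indicator_of_notMem, hω]
    have hχint : Integrable χ P := (integrable_const (1:ℝ)).indicator hZt
    have hχsm : AEStronglyMeasurable χ P :=
      (stronglyMeasurable_const.indicator hZt).aestronglyMeasurable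
    have hhχint : Integrable (h * χ) P := by
      refine hhint.abs.mono' (((hhsm.mono hm).aestronglyMeasurable).mul hχsm)
        (ae_of_all _ fun ω => ?_)
      rw [Pi.mul_apply, Real.norm_eq_abs, abs_mul]
      calc |h ω| * |χ ω| ≤ |h ω| * 1 := by
            exact mul_le_mul_of_nonneg_left (hχabs ω) (abs_nonneg _)
        _ = |h ω| := mul_one _
    -- LHS
    have lhs_eq : ∫ ω in B ∩ Z ⁻¹' t, h ω ∂P
        = ∫ ω in B, h ω * (P[χ|m]) ω ∂P := by
      have e1 : ∫ ω in B ∩ Z ⁻¹' t, h ω ∂P = ∫ ω in B, (h * χ) ω ∂P := by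
        rw [← setIntegral_indicator hZt]
        refine setIntegral_congr_ae hBm (ae_of_all _ fun ω _ => ?_)
        rw [Pi.mul_apply, hχdef]
        by_cases hω : ω ∈ Z ⁻¹' t <;>
          simp [Set.indicator_of_mem, Set.indicator_of_notMem, hω]
      rw [e1, ← setIntegral_condExp hm hhχint hB]
      refine setIntegral_congr_ae hBm ?_
      filter_upwards [condExp_mul_of_stronglyMeasurable_left hhsm hhχint hχint] with ω hω _
      rw [hω, Pi.mul_apply]
    -- RHS
    have rhs_eq : ∫ ω in B ∩ Z ⁻¹' t, A ω ∂P
        = ∫ ω in B, h ω * (P[χ|m]) ω ∂P := by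
      have e2 : ∫ ω in B ∩ Z ⁻¹' t, A ω ∂P
          = ∫ ω in B, (s₁ ∩ Z ⁻¹' t).indicator (fun _ => (1:ℝ)) ω ∂P := by
        rw [← setIntegral_indicator hZt]
        refine setIntegral_congr_ae hBm (ae_of_all _ fun ω _ => ?_)
        by_cases h1 : ω ∈ s₁ <;> by_cases h2 : ω ∈ Z ⁻¹' t
        · rw [Set.indicator_of_mem h2, Set.indicator_of_mem (Set.mem_inter h1 h2)]
          simpa [hs₁def] using h1
        · rw [Set.indicator_of_notMem h2, Set.indicator_of_notMem (fun hc => h2 hc.2)]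
        · rw [Set.indicator_of_mem h2, Set.indicator_of_notMem (fun hc => h1 hc.1)]
          exact (hAbin ω).resolve_right fun he => h1 (by simp [hs₁def, he])
        · rw [Set.indicator_of_notMem h2, Set.indicator_of_notMem (fun hc => h2 hc.2)]
      rw [e2, ← setIntegral_condExp hm ((integrable_const (1:ℝ)).indicator (hs₁.inter hZt)) hB]
      refine setIntegral_congr_ae hBm ?_
      filter_upwards [hfact t ht] with ω hω _
      exact hω
    rw [lhs_eq, rhs_eq]
  -- the join sigma-algebra and its pi-system
  have hmJ : m ⊔ MeasurableSpace.comap Z inferInstance ≤ mΩ := sup_le hm hZ.comap_le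
  set pi : Set (Set Ω) :=
    {S | ∃ B t, MeasurableSet[m] B ∧ MeasurableSet t ∧ S = B ∩ Z ⁻¹' t} with hpidef
  have hgen : (m ⊔ MeasurableSpace.comap Z inferInstance) = MeasurableSpace.generateFrom pi := by
    refine le_antisymm (sup_le ?_ ?_) (MeasurableSpace.generateFrom_le ?_)
    · intro B hB
      exact MeasurableSpace.measurableSet_generateFrom
        ⟨B, Set.univ, hB, MeasurableSet.univ, by simp⟩
    · rintro S ⟨t, ht, rfl⟩
      exact MeasurableSpace.measurableSet_generateFrom
        ⟨Set.univ, t, MeasurableSet.univ, ht, by simp⟩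
    · rintro S ⟨B, t, hB, ht, rfl⟩
      exact ((le_sup_left : m ≤ (m ⊔ MeasurableSpace.comap Z inferInstance)) _ hB).inter ((le_sup_right : MeasurableSpace.comap Z inferInstance ≤ m ⊔ MeasurableSpace.comap Z inferInstance) _ ⟨t, ht, rfl⟩)
  have hpi : IsPiSystem pi := by
    rintro S ⟨B1, t1, hB1, ht1, rfl⟩ T ⟨B2, t2, hB2, ht2, rfl⟩ -
    refine ⟨B1 ∩ B2, t1 ∩ t2, hB1.inter hB2, ht1.inter ht2, ?_⟩
    ext ω
    simp only [Set.mem_inter_iff, Set.mem_preimage]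
    tauto
  have key_all : ∀ S : Set Ω, MeasurableSet[(m ⊔ MeasurableSpace.comap Z inferInstance)] S →
      ∫ ω in S, h ω ∂P = ∫ ω in S, A ω ∂P := by
    have htotal : ∫ ω, h ω ∂P = ∫ ω, A ω ∂P := by
      rw [← hPA]
      exact integral_condExp hm
    intro S hS
    refine MeasurableSpace.induction_on_inter (m := m ⊔ MeasurableSpace.comap Z inferInstance)
      (C := fun S _ => ∫ ω in S, h ω ∂P = ∫ ω in S, A ω ∂P) hgen hpi ?_ ?_ ?_ ?_ S hS
    · simp
    · rintro S' ⟨B, t, hB, ht, rfl⟩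
      exact key_base B hB t ht
    · intro u hu hCu
      have huΩ : MeasurableSet[mΩ] u := hmJ _ hu
      have e1 := integral_add_compl huΩ hhint
      have e2 := integral_add_compl huΩ hAint
      have : ∫ ω in u, h ω ∂P + ∫ ω in uᶜ, h ω ∂P
          = ∫ ω in u, A ω ∂P + ∫ ω in uᶜ, A ω ∂P := by
        rw [e1, e2, htotal]
      linarith [this, hCu]
    · intro f hdisj hfmeas hC
      have hfm : ∀ i, MeasurableSet[mΩ] (f i) := fun i => hmJ _ (hfmeas i)
      rw [integral_iUnion (μ := P) hfm hdisj hhint.integrableOn,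
        integral_iUnion (μ := P) hfm hdisj hAint.integrableOn]
      exact tsum_congr hC
  have key : h =ᵐ[P] P[A|(m ⊔ MeasurableSpace.comap Z inferInstance)] := by
    refine ae_eq_condExp_of_forall_setIntegral_eq hmJ hAint
      (fun s _ _ => hhint.integrableOn) (fun s hs _ => key_all s hs) ?_
    exact StronglyMeasurable.aestronglyMeasurable (hhsm.mono le_sup_left)
  -- final computation
  have hZsm : StronglyMeasurable[MeasurableSpace.comap Z inferInstance] Z :=
    Measurable.stronglyMeasurable (fun t ht => ⟨t, ht, rfl⟩)
  set u : Ω → ℝ := fun ω => g ω * Z ω with hudef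
  have husm : StronglyMeasurable[(m ⊔ MeasurableSpace.comap Z inferInstance)] u := (hg.mono le_sup_left).mul (hZsm.mono le_sup_right)
  have hgsm : AEStronglyMeasurable g P := (hg.mono hm).aestronglyMeasurable
  have huint : Integrable u P :=
    hZint.bdd_mul hgsm (ae_of_all _ fun ω => by rw [Real.norm_eq_abs]; exact hgC ω)
  have huAint : Integrable (u * A) P := by
    refine (huint.bdd_mul hA.aestronglyMeasurable
      (ae_of_all _ fun ω => by rw [Real.norm_eq_abs]; exact hAabs ω)).congr
      (ae_of_all _ fun ω => mul_comm (A ω) (u ω))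
  set v : Ω → ℝ := fun ω => g ω * h ω with hvdef
  have hvsm : StronglyMeasurable[m] v := hg.mul hhsm
  have hvZint : Integrable (v * Z) P := by
    refine (hZint.bdd_mul (c := C) ((hg.mono hm).mul (hhsm.mono hm)).aestronglyMeasurable ?_).congr
      (ae_of_all _ fun ω => rfl)
    filter_upwards [hh1] with ω hω
    rw [Pi.mul_apply, Real.norm_eq_abs, abs_mul]
    calc |g ω| * |h ω| ≤ C * 1 := mul_le_mul (hgC ω) hω (abs_nonneg _) hC0
      _ = C := mul_one C
  have step1 : (fun ω => g ω * (A ω * Z ω)) = u * A := by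
    funext ω
    show g ω * (A ω * Z ω) = u ω * A ω
    simp only [hudef]
    ring
  calc ∫ ω, g ω * (A ω * Z ω) ∂P
      = ∫ ω, (u * A) ω ∂P := by rw [step1]
    _ = ∫ ω, (P[u * A|(m ⊔ MeasurableSpace.comap Z inferInstance)]) ω ∂P := (integral_condExp hmJ).symm
    _ = ∫ ω, u ω * (P[A|(m ⊔ MeasurableSpace.comap Z inferInstance)]) ω ∂P := by
        refine integral_congr_ae ?_
        filter_upwards [condExp_mul_of_stronglyMeasurable_left husm huAint hAint] with ω hω
        rw [hω, Pi.mul_apply]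
    _ = ∫ ω, u ω * h ω ∂P := by
        refine integral_congr_ae ?_
        filter_upwards [key] with ω hω
        rw [hω]
    _ = ∫ ω, (v * Z) ω ∂P := by
        refine integral_congr_ae (ae_of_all _ fun ω => ?_)
        rw [Pi.mul_apply, hudef, hvdef]; ring
    _ = ∫ ω, (P[v * Z|m]) ω ∂P := (integral_condExp hm).symm
    _ = ∫ ω, v ω * (P[Z|m]) ω ∂P := by
        refine integral_congr_ae ?_
        filter_upwards [condExp_mul_of_stronglyMeasurable_left hvsm hvZint hZint] with ω hω
        rw [hω, Pi.mul_apply]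
    _ = ∫ ω, g ω * ((P[A|m]) ω * (P[Z|m]) ω) ∂P := by
        rw [hPA]
        refine integral_congr_ae (ae_of_all _ fun ω => ?_)
        rw [hvdef]; ring

end AuxLemmas

/-- Identification of the incremental effect for one time point (weighting form).
Under consistency (`Y = Yᴬ` a.s.) and exchangeability (`A ⟂ Yᵃ | X`), the counterfactual
mean `E[Y^Q] = E[q(π(X);δ) E(Y¹|X) + (1-q(π(X);δ)) E(Y⁰|X)]` under the incremental
propensity score intervention `q(π;δ) = δπ/(δπ+1-π)` equals
`E[Y(δA + 1 - A)/(δπ(X) + 1 - π(X))]`. -/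
theorem incremental_identification_weighting_form
    {Ω 𝒳 : Type*} [MeasurableSpace Ω] [StandardBorelSpace Ω] [Nonempty Ω]
    [MeasurableSpace 𝒳]
    (P : Measure Ω) [IsProbabilityMeasure P]
    (X : Ω → 𝒳) (A Y Y0 Y1 : Ω → ℝ)
    (hX : Measurable X) (hA : Measurable A) (hY : Measurable Y)
    (hY0 : Integrable Y0 P) (hY1 : Integrable Y1 P)
    (hAbin : ∀ ω, A ω = 0 ∨ A ω = 1)
    -- consistency: Y = Yᴬ almost surely
    (hcons : ∀ᵐ ω ∂P, Y ω = if A ω = 1 then Y1 ω else Y0 ω)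
    -- exchangeability: A ⟂ Yᵃ | X for a = 0, 1
    (hexch0 : CondIndepFun (MeasurableSpace.comap X inferInstance) hX.comap_le A Y0 P)
    (hexch1 : CondIndepFun (MeasurableSpace.comap X inferInstance) hX.comap_le A Y1 P)
    -- π(x) = P(A = 1 | X = x)
    (π : 𝒳 → ℝ) (hπmeas : Measurable π)
    (hπ : (fun ω => π (X ω)) =ᵐ[P] P[A|MeasurableSpace.comap X inferInstance])
    (δ : ℝ) (hδ : 0 < δ) :
    ∫ ω, ((δ * π (X ω) / (δ * π (X ω) + 1 - π (X ω))) *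
            (P[Y1|MeasurableSpace.comap X inferInstance]) ω
        + (1 - δ * π (X ω) / (δ * π (X ω) + 1 - π (X ω))) *
            (P[Y0|MeasurableSpace.comap X inferInstance]) ω) ∂P
      = ∫ ω, Y ω * (δ * A ω + 1 - A ω) / (δ * π (X ω) + 1 - π (X ω)) ∂P := by
  have hm := hX.comap_le
  -- measurable representatives of Y1 and Y0
  set Z1 : Ω → ℝ := hY1.1.mk Y1 with hZ1def
  have hZ1sm : StronglyMeasurable Z1 := hY1.1.stronglyMeasurable_mk
  have hZ1 : Measurable Z1 := hZ1sm.measurable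
  have hY1Z1 : Y1 =ᵐ[P] Z1 := hY1.1.ae_eq_mk
  have hZ1int : Integrable Z1 P := hY1.congr hY1Z1
  set Z0 : Ω → ℝ := hY0.1.mk Y0 with hZ0def
  have hZ0sm : StronglyMeasurable Z0 := hY0.1.stronglyMeasurable_mk
  have hZ0 : Measurable Z0 := hZ0sm.measurable
  have hY0Z0 : Y0 =ᵐ[P] Z0 := hY0.1.ae_eq_mk
  have hZ0int : Integrable Z0 P := hY0.congr hY0Z0
  -- conditional independence transported to the measurable representatives
  have hexch1' : CondIndepFun (MeasurableSpace.comap X inferInstance) hX.comap_le A Z1 P :=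
    my_condIndepFun_congr_right hX.comap_le hY1Z1 hexch1
  have hexch0' : CondIndepFun (MeasurableSpace.comap X inferInstance) hX.comap_le A Z0 P :=
    my_condIndepFun_congr_right hX.comap_le hY0Z0 hexch0
  have hfact1 := (condIndepFun_iff_condExp_inter_preimage_eq_mul hA hZ1).mp hexch1'
  have hfact0 := (condIndepFun_iff_condExp_inter_preimage_eq_mul hA hZ0).mp hexch0'
  -- the complementary treatment indicator
  set A' : Ω → ℝ := fun ω => 1 - A ω with hA'def
  have hA' : Measurable A' := measurable_const.sub hA
  have hA'bin : ∀ ω, A' ω = 0 ∨ A' ω = 1 := fun ω => by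
    rcases hAbin ω with h | h
    · right; simp [hA'def, h]
    · left; simp [hA'def, h]
  have hA'set : A' ⁻¹' ({1} : Set ℝ) = A ⁻¹' ({0} : Set ℝ) := by
    ext ω
    simp only [Set.mem_preimage, Set.mem_singleton_iff, hA'def]
    constructor <;> intro h <;> linarith
  have hfact0' : ∀ t : Set ℝ, MeasurableSet t →
      (P⟦A' ⁻¹' {1} ∩ Z0 ⁻¹' t | MeasurableSpace.comap X inferInstance⟧) =ᵐ[P]
        fun ω => (P⟦A' ⁻¹' {1} | MeasurableSpace.comap X inferInstance⟧) ω *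
          (P⟦Z0 ⁻¹' t | MeasurableSpace.comap X inferInstance⟧) ω := by
    intro t ht
    rw [hA'set]
    exact hfact0 {0} t (measurableSet_singleton 0) ht
  -- integrability of A and bounds for the propensity score
  have hAint : Integrable A P := by
    refine (integrable_const (1:ℝ)).mono' hA.aestronglyMeasurable (ae_of_all _ fun ω => ?_)
    rcases hAbin ω with h' | h' <;> simp [h']
  have h01 : ∀ᵐ ω ∂P, 0 ≤ π (X ω) ∧ π (X ω) ≤ 1 := by
    have hnn : 0 ≤ᵐ[P] P[A|MeasurableSpace.comap X inferInstance] :=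
      condExp_nonneg (ae_of_all _ fun ω => by rcases hAbin ω with h' | h' <;> simp [h'])
    have hle : P[A|MeasurableSpace.comap X inferInstance] ≤ᵐ[P] fun _ => (1:ℝ) := by
      have h2 := condExp_mono (μ := P) (m := MeasurableSpace.comap X inferInstance)
        hAint (integrable_const (1:ℝ))
        (ae_of_all _ fun ω => by rcases hAbin ω with h' | h' <;> simp [h'])
      rw [condExp_const hm] at h2
      exact h2
    filter_upwards [hπ, hnn, hle] with ω h1 h2 h3
    rw [h1]
    exact ⟨h2, h3⟩
  -- the clamped propensity score
  set π' : 𝒳 → ℝ := fun x => max 0 (min 1 (π x)) with hπ'def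
  have hπ'meas : Measurable π' := measurable_const.max (measurable_const.min hπmeas)
  have hπ'01 : ∀ x, 0 ≤ π' x ∧ π' x ≤ 1 := fun x =>
    ⟨le_max_left 0 _, max_le (by norm_num) (min_le_left 1 _)⟩
  have hπ'eq : ∀ᵐ ω ∂P, π' (X ω) = π (X ω) := by
    filter_upwards [h01] with ω h
    rw [hπ'def]
    simp only
    rw [min_eq_right h.2, max_eq_right h.1]
  have hπ'PA : (fun ω => π' (X ω)) =ᵐ[P] P[A|MeasurableSpace.comap X inferInstance] := by
    filter_upwards [hπ'eq, hπ] with ω h1 h2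
    rw [h1, h2]
  -- denominator bounds
  have hc : 0 < min δ 1 := lt_min hδ one_pos
  have hd : ∀ x, min δ 1 ≤ δ * π' x + 1 - π' x := fun x => by
    obtain ⟨h0, h1⟩ := hπ'01 x
    rcases le_total δ 1 with hδ1 | hδ1
    · rw [min_eq_left hδ1]; nlinarith
    · rw [min_eq_right hδ1]; nlinarith
  have hdpos : ∀ x, 0 < δ * π' x + 1 - π' x := fun x => lt_of_lt_of_le hc (hd x)
  -- the weight function
  set g' : Ω → ℝ := fun ω => (δ * π' (X ω) + 1 - π' (X ω))⁻¹ with hg'def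
  have hfm : Measurable (fun x => (δ * π' x + 1 - π' x)⁻¹) :=
    (((hπ'meas.const_mul δ).add measurable_const).sub hπ'meas).inv
  have hXc : Measurable[MeasurableSpace.comap X inferInstance] X := fun s hs => ⟨s, hs, rfl⟩
  have hg'm : Measurable[MeasurableSpace.comap X inferInstance] g' := hfm.comp hXc
  have hg'sm : StronglyMeasurable[MeasurableSpace.comap X inferInstance] g' :=
    hg'm.stronglyMeasurable
  have hg'amb : Measurable g' := hfm.comp hX
  have hg'pos : ∀ ω, 0 < g' ω := fun ω => inv_pos.mpr (hdpos (X ω))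
  have hg'bdd : ∀ ω, |g' ω| ≤ (min δ 1)⁻¹ := fun ω => by
    rw [abs_of_pos (hg'pos ω), hg'def]
    exact inv_anti₀ hc (hd (X ω))
  -- the two applications of the key identity
  have EQ1 := my_aux_integral P hm A Z1 hA hAbin hZ1 hZ1int
    (fun t ht => hfact1 {1} t (measurableSet_singleton 1) ht) g' hg'sm ((min δ 1)⁻¹) hg'bdd
  have EQ0 := my_aux_integral P hm A' Z0 hA' hA'bin hZ0 hZ0int hfact0' g' hg'sm
    ((min δ 1)⁻¹) hg'bdd
  -- conditional expectations agree
  have hE1 : P[Z1|MeasurableSpace.comap X inferInstance]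
      =ᵐ[P] P[Y1|MeasurableSpace.comap X inferInstance] := condExp_congr_ae hY1Z1.symm
  have hE0 : P[Z0|MeasurableSpace.comap X inferInstance]
      =ᵐ[P] P[Y0|MeasurableSpace.comap X inferInstance] := condExp_congr_ae hY0Z0.symm
  have hA'c : P[A'|MeasurableSpace.comap X inferInstance]
      =ᵐ[P] fun ω => 1 - (P[A|MeasurableSpace.comap X inferInstance]) ω := by
    have e : A' = (fun _ => (1:ℝ)) - A := rfl
    rw [e]
    have h1 := condExp_sub (μ := P) (m := MeasurableSpace.comap X inferInstance)
      (integrable_const (1:ℝ)) hAint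
    rw [condExp_const hm] at h1
    filter_upwards [h1] with ω hω
    rw [hω]
    rfl
  -- integrability facts
  have hAZ1int : Integrable (fun ω => A ω * Z1 ω) P :=
    hZ1int.bdd_mul (c := 1) hA.aestronglyMeasurable
      (ae_of_all _ fun ω => by
        rw [Real.norm_eq_abs]
        rcases hAbin ω with h' | h' <;> simp [h'])
  have hA'Z0int : Integrable (fun ω => A' ω * Z0 ω) P :=
    hZ0int.bdd_mul (c := 1) hA'.aestronglyMeasurable
      (ae_of_all _ fun ω => by
        rw [Real.norm_eq_abs]
        rcases hA'bin ω with h' | h' <;> simp [h'])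
  have intA1 : Integrable (fun ω => g' ω * (A ω * Z1 ω)) P :=
    hAZ1int.bdd_mul (c := (min δ 1)⁻¹) hg'amb.aestronglyMeasurable
      (ae_of_all _ fun ω => by rw [Real.norm_eq_abs]; exact hg'bdd ω)
  have intA0 : Integrable (fun ω => g' ω * (A' ω * Z0 ω)) P :=
    hA'Z0int.bdd_mul (c := (min δ 1)⁻¹) hg'amb.aestronglyMeasurable
      (ae_of_all _ fun ω => by rw [Real.norm_eq_abs]; exact hg'bdd ω)
  -- bounded weight q' = δ π' g'
  have hq'meas : Measurable (fun ω => δ * π' (X ω) * g' ω) :=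
    ((hπ'meas.comp hX).const_mul δ).mul hg'amb
  have hq'bdd : ∀ ω, |δ * π' (X ω) * g' ω| ≤ δ * (min δ 1)⁻¹ := fun ω => by
    rw [abs_mul, abs_mul, abs_of_pos hδ]
    calc δ * |π' (X ω)| * |g' ω| ≤ δ * 1 * (min δ 1)⁻¹ := by
          refine mul_le_mul ?_ (hg'bdd ω) (abs_nonneg _) (by positivity)
          refine mul_le_mul_of_nonneg_left ?_ hδ.le
          rw [abs_of_nonneg (hπ'01 (X ω)).1]
          exact (hπ'01 (X ω)).2
      _ = δ * (min δ 1)⁻¹ := by ring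
  have int1 : Integrable
      (fun ω => (δ * π' (X ω) * g' ω) * (P[Y1|MeasurableSpace.comap X inferInstance]) ω) P :=
    integrable_condExp.bdd_mul (c := δ * (min δ 1)⁻¹) hq'meas.aestronglyMeasurable
      (ae_of_all _ fun ω => by rw [Real.norm_eq_abs]; exact hq'bdd ω)
  have int0 : Integrable
      (fun ω => (1 - δ * π' (X ω) * g' ω) * (P[Y0|MeasurableSpace.comap X inferInstance]) ω) P :=
    integrable_condExp.bdd_mul (c := 1 + δ * (min δ 1)⁻¹)
      (measurable_const.sub hq'meas).aestronglyMeasurable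
      (ae_of_all _ fun ω => by
        rw [Real.norm_eq_abs]
        calc |1 - δ * π' (X ω) * g' ω| ≤ |(1:ℝ)| + |δ * π' (X ω) * g' ω| := abs_sub _ _
          _ ≤ 1 + δ * (min δ 1)⁻¹ := by
              rw [abs_one]
              exact add_le_add_right (hq'bdd ω) 1)
  -- rewrite of 1 - q'
  have hone : ∀ ω, 1 - δ * π' (X ω) * g' ω = (1 - π' (X ω)) * g' ω := fun ω => by
    have hne := (hdpos (X ω)).ne'
    rw [hg'def]
    field_simp
    ring
  -- LHS computation
  have LHS_eq : ∫ ω, ((δ * π (X ω) / (δ * π (X ω) + 1 - π (X ω))) *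
            (P[Y1|MeasurableSpace.comap X inferInstance]) ω
        + (1 - δ * π (X ω) / (δ * π (X ω) + 1 - π (X ω))) *
            (P[Y0|MeasurableSpace.comap X inferInstance]) ω) ∂P
      = δ * ∫ ω, g' ω * (A ω * Z1 ω) ∂P + ∫ ω, g' ω * (A' ω * Z0 ω) ∂P := by
    have e1 : ∫ ω, ((δ * π (X ω) / (δ * π (X ω) + 1 - π (X ω))) *
            (P[Y1|MeasurableSpace.comap X inferInstance]) ω
        + (1 - δ * π (X ω) / (δ * π (X ω) + 1 - π (X ω))) *
            (P[Y0|MeasurableSpace.comap X inferInstance]) ω) ∂P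
        = ∫ ω, ((δ * π' (X ω) * g' ω) * (P[Y1|MeasurableSpace.comap X inferInstance]) ω
          + (1 - δ * π' (X ω) * g' ω) * (P[Y0|MeasurableSpace.comap X inferInstance]) ω) ∂P := by
      refine integral_congr_ae ?_
      filter_upwards [hπ'eq] with ω hω
      rw [← hω, hg'def, div_eq_mul_inv]
    rw [e1, integral_add int1 int0]
    congr 1
    · -- first term
      have e2 : ∫ ω, (δ * π' (X ω) * g' ω) *
            (P[Y1|MeasurableSpace.comap X inferInstance]) ω ∂P
          = δ * ∫ ω, g' ω * ((P[A|MeasurableSpace.comap X inferInstance]) ω *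
              (P[Z1|MeasurableSpace.comap X inferInstance]) ω) ∂P := by
        rw [← integral_const_mul δ _]
        refine integral_congr_ae ?_
        filter_upwards [hπ'PA, hE1] with ω h1 h2
        rw [← h1, ← h2]
        ring
      rw [e2, ← EQ1]
    · -- second term
      have e3 : ∫ ω, (1 - δ * π' (X ω) * g' ω) *
            (P[Y0|MeasurableSpace.comap X inferInstance]) ω ∂P
          = ∫ ω, g' ω * ((P[A'|MeasurableSpace.comap X inferInstance]) ω *
              (P[Z0|MeasurableSpace.comap X inferInstance]) ω) ∂P := by
        refine integral_congr_ae ?_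
        filter_upwards [hπ'PA, hE0, hA'c] with ω h1 h2 h3
        rw [hone ω, h3, ← h1, ← h2]
        ring
      rw [e3, ← EQ0]
  -- RHS computation
  have RHS_eq : ∫ ω, Y ω * (δ * A ω + 1 - A ω) / (δ * π (X ω) + 1 - π (X ω)) ∂P
      = δ * ∫ ω, g' ω * (A ω * Z1 ω) ∂P + ∫ ω, g' ω * (A' ω * Z0 ω) ∂P := by
    have e4 : ∫ ω, Y ω * (δ * A ω + 1 - A ω) / (δ * π (X ω) + 1 - π (X ω)) ∂P
        = ∫ ω, (δ * (g' ω * (A ω * Z1 ω)) + g' ω * (A' ω * Z0 ω)) ∂P := by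
      refine integral_congr_ae ?_
      filter_upwards [hcons, hY1Z1, hY0Z0, hπ'eq] with ω h1 h2 h3 h4
      simp only [← h4, hA'def, hg'def, div_eq_mul_inv]
      rcases hAbin ω with h' | h'
      · rw [h1, h', if_neg (by norm_num), h3]
        ring
      · rw [h1, h', if_pos rfl, h2]
        ring
    rw [e4, integral_add (intA1.const_mul δ) intA0, integral_const_mul δ _]
  rw [LHS_eq, RHS_eq]
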